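/- Let A be a symmetric n×n real matrix, R an n×m real matrix with Rᵀ R = I_m (m ≤ n), and B = Rᵀ A R. Let λ_1 ≥ ... ≥ λ_n be the eigenvalues of A and μ_1 ≥ ... ≥ μ_m the eigenvalues of B, in decreasing order with multiplicity. Then: (a) λ_{n-m+i} ≤ μ_i ≤ λ_i for i = 1,...,m (the eigenvalues of B interlace those of A); consequently λ_n + ... + λ_{n-m+1} ≤ tr(Rᵀ A R) ≤ λ_1 + ... + λ_m. (b) If λ_i = μ_i for some i, then there is an eigenvector v of B with eigenvalue μ_i such that R v is an eigenvector of A with eigenvalue λ_i. -/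

import Mathlib

open Matrix

open Submodule FiniteDimensional

namespace Helpers

lemma sum_dot {ι : Type*} [Fintype ι] {N : ℕ} (c : ι → ℝ) (g : ι → Fin N → ℝ) (a : Fin N → ℝ) :
    (∑ j, c j • g j) ⬝ᵥ a = ∑ j, c j * (g j ⬝ᵥ a) := by
  simp only [dotProduct, Finset.sum_apply, Pi.smul_apply, smul_eq_mul, Finset.sum_mul,
    Finset.mul_sum, mul_assoc]
  exact Finset.sum_comm

lemma dot_sum {ι : Type*} [Fintype ι] {N : ℕ} (c : ι → ℝ) (g : ι → Fin N → ℝ) (a : Fin N → ℝ) :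
    a ⬝ᵥ (∑ j, c j • g j) = ∑ j, c j * (a ⬝ᵥ g j) := by
  rw [dotProduct_comm, sum_dot]
  simp [dotProduct_comm]

lemma mulVec_sum {ι : Type*} [Fintype ι] {N M : ℕ} (T : Matrix (Fin M) (Fin N) ℝ)
    (c : ι → ℝ) (g : ι → Fin N → ℝ) :
    T *ᵥ (∑ j, c j • g j) = ∑ j, c j • (T *ᵥ g j) := by
  simp only [← T.mulVecLin_apply, map_sum, _root_.map_smul]

lemma dot_expand {ι : Type*} [Fintype ι] [DecidableEq ι] {N : ℕ}
    (g : ι → Fin N → ℝ) (hg : ∀ i j, g i ⬝ᵥ g j = if i = j then (1:ℝ) else 0)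
    (c d : ι → ℝ) :
    (∑ j, c j • g j) ⬝ᵥ (∑ k, d k • g k) = ∑ j, c j * d j := by
  rw [sum_dot]
  refine Finset.sum_congr rfl fun j _ => ?_
  rw [dot_sum]
  simp [hg, Finset.sum_ite_eq', dotProduct_comm]

lemma ortho_li {ι : Type*} [Fintype ι] [DecidableEq ι] {N : ℕ}
    (g : ι → Fin N → ℝ) (hg : ∀ i j, g i ⬝ᵥ g j = if i = j then (1:ℝ) else 0) :
    LinearIndependent ℝ g := by
  rw [Fintype.linearIndependent_iff]
  intro f hf j
  have h := congrArg (fun z => z ⬝ᵥ g j) hf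
  simp only [sum_dot, hg, zero_dotProduct] at h
  rw [Finset.sum_congr rfl (fun k _ => by rw [mul_ite, mul_one, mul_zero]),
    Finset.sum_ite_eq' Finset.univ j f] at h
  simpa using h

lemma pos_of_ne_zero {N : ℕ} {x : Fin N → ℝ} (h : x ≠ 0) : 0 < x ⬝ᵥ x := by
  have h0 : (0:ℝ) ≤ x ⬝ᵥ x := Finset.sum_nonneg fun i _ => mul_self_nonneg (x i)
  rcases lt_or_eq_of_le h0 with h1 | h1
  · exact h1
  · exact absurd (dotProduct_self_eq_zero.mp h1.symm) h

end Helpers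

open Helpers Module

lemma key_upper {n m : ℕ} (hmn : m ≤ n)
    (A : Matrix (Fin n) (Fin n) ℝ)
    (R : Matrix (Fin n) (Fin m) ℝ) (hR : Rᵀ * R = 1)
    (lam : Fin n → ℝ) (hlam : Antitone lam)
    (u : Fin n → Fin n → ℝ)
    (huo : ∀ i j, u i ⬝ᵥ u j = if i = j then (1 : ℝ) else 0)
    (hue : ∀ i, A *ᵥ u i = lam i • u i)
    (mu : Fin m → ℝ) (hmu : Antitone mu)
    (v : Fin m → Fin m → ℝ)
    (hvo : ∀ i j, v i ⬝ᵥ v j = if i = j then (1 : ℝ) else 0)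
    (hve : ∀ i, (Rᵀ * A * R) *ᵥ v i = mu i • v i) (i : Fin m) :
    mu i ≤ lam ⟨i, i.2.trans_le hmn⟩ ∧
    (lam ⟨i, i.2.trans_le hmn⟩ = mu i →
      ∃ w : Fin m → ℝ, w ≠ 0 ∧ (Rᵀ * A * R) *ᵥ w = mu i • w ∧ R *ᵥ w ≠ 0 ∧
        A *ᵥ (R *ᵥ w) = lam ⟨i, i.2.trans_le hmn⟩ • (R *ᵥ w)) := by
  classical
  have hin : (i : ℕ) < n := i.2.trans_le hmn
  set i0 : Fin n := ⟨i, hin⟩ with hi0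
  -- R preserves dot products
  have hRdot : ∀ a b : Fin m → ℝ, (R *ᵥ a) ⬝ᵥ (R *ᵥ b) = a ⬝ᵥ b := by
    intro a b
    rw [Matrix.dotProduct_mulVec]
    have h1 : (R *ᵥ a) ᵥ* R = a := by
      rw [← Matrix.mulVec_transpose, Matrix.mulVec_mulVec, hR, Matrix.one_mulVec]
    rw [h1]
  -- index embeddings
  set e : Fin ((i:ℕ)+1) → Fin m := fun j => ⟨(j:ℕ), by have := j.2; have := i.2; omega⟩ with he
  set f : Fin (n - (i:ℕ)) → Fin n := fun k => ⟨(i:ℕ) + (k:ℕ), by have := k.2; omega⟩ with hf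
  have heinj : Function.Injective e := by
    intro a b hab
    have h := congrArg (fun z : Fin m => (z : ℕ)) hab
    simp only [he] at h
    exact Fin.ext h
  have hfinj : Function.Injective f := by
    intro a b hab
    have h := congrArg (fun z : Fin n => (z : ℕ)) hab
    simp only [hf] at h
    exact Fin.ext (by omega)
  have hvo2 : ∀ j k, v (e j) ⬝ᵥ v (e k) = if j = k then (1:ℝ) else 0 := by
    intro j k
    rw [hvo]
    by_cases h : j = k
    · simp [h]
    · rw [if_neg h, if_neg fun hc => h (heinj hc)]
  have huo2 : ∀ j k, u (f j) ⬝ᵥ u (f k) = if j = k then (1:ℝ) else 0 := by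
    intro j k
    rw [huo]
    by_cases h : j = k
    · simp [h]
    · rw [if_neg h, if_neg fun hc => h (hfinj hc)]
  have hgo : ∀ j k, (R *ᵥ v (e j)) ⬝ᵥ (R *ᵥ v (e k)) = if j = k then (1:ℝ) else 0 := by
    intro j k; rw [hRdot]; exact hvo2 j k
  -- subspaces and dimension count
  set S1 : Submodule ℝ (Fin n → ℝ) := span ℝ (Set.range fun j => R *ᵥ v (e j)) with hS1
  set S2 : Submodule ℝ (Fin n → ℝ) := span ℝ (Set.range fun k => u (f k)) with hS2
  have hd1 : finrank ℝ S1 = (i:ℕ) + 1 := by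
    rw [hS1, finrank_span_eq_card (ortho_li _ hgo)]; simp
  have hd2 : finrank ℝ S2 = n - (i:ℕ) := by
    rw [hS2, finrank_span_eq_card (ortho_li _ huo2)]; simp
  have hne : S1 ⊓ S2 ≠ ⊥ := by
    intro hbot
    have h3 := Submodule.finrank_sup_add_finrank_inf_eq S1 S2
    rw [hbot, hd1, hd2] at h3
    have h4 : finrank ℝ ↥(S1 ⊔ S2) ≤ n := by
      have h5 := Submodule.finrank_le (S1 ⊔ S2)
      simpa using h5
    rw [finrank_bot] at h3
    omega
  obtain ⟨x, hxmem, hx0⟩ := Submodule.exists_mem_ne_zero_of_ne_bot hne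
  obtain ⟨hx1, hx2⟩ := Submodule.mem_inf.mp hxmem
  rw [hS1, mem_span_range_iff_exists_fun] at hx1
  rw [hS2, mem_span_range_iff_exists_fun] at hx2
  obtain ⟨c, hc⟩ := hx1
  obtain ⟨d, hd⟩ := hx2
  set w : Fin m → ℝ := ∑ j, c j • v (e j) with hw
  have hxw : R *ᵥ w = x := by rw [hw, Helpers.mulVec_sum]; exact hc
  have hw0 : w ≠ 0 := fun h => hx0 (by rw [← hxw, h, Matrix.mulVec_zero])
  have hNw : w ⬝ᵥ w = ∑ j, c j * c j := dot_expand _ hvo2 c c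
  have hNxw : x ⬝ᵥ x = w ⬝ᵥ w := by rw [← hxw, hRdot]
  have hNx : ∑ k, d k * d k = w ⬝ᵥ w := by
    rw [← hNxw, ← hd]; exact (dot_expand _ huo2 d d).symm
  have hNpos : 0 < w ⬝ᵥ w := by rw [← hNxw]; exact pos_of_ne_zero hx0
  -- expansions of B w and A x
  have hBw : (Rᵀ * A * R) *ᵥ w = ∑ j, (c j * mu (e j)) • v (e j) := by
    rw [hw, Helpers.mulVec_sum]
    simp only [hve, smul_smul]
  have hAx : A *ᵥ x = ∑ k, (d k * lam (f k)) • u (f k) := by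
    rw [← hd, Helpers.mulVec_sum]
    simp only [hue, smul_smul]
  -- the Rayleigh quotient computed two ways
  have hq1 : w ⬝ᵥ ((Rᵀ * A * R) *ᵥ w) = ∑ j, c j * (c j * mu (e j)) := by
    rw [hBw, hw]; exact dot_expand _ hvo2 c _
  have hq2 : x ⬝ᵥ (A *ᵥ x) = ∑ k, d k * (d k * lam (f k)) := by
    rw [hAx, ← hd]; exact dot_expand _ huo2 d _
  have hqq : w ⬝ᵥ ((Rᵀ * A * R) *ᵥ w) = x ⬝ᵥ (A *ᵥ x) := by
    have h6 : (Rᵀ * A * R) *ᵥ w = Rᵀ *ᵥ (A *ᵥ x) := by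
      rw [← hxw, ← Matrix.mulVec_mulVec, ← Matrix.mulVec_mulVec]
    rw [h6, Matrix.dotProduct_mulVec, Matrix.vecMul_transpose, hxw]
  have hmuej : ∀ j : Fin ((i:ℕ)+1), mu i ≤ mu (e j) := by
    intro j
    refine hmu ?_
    rw [Fin.le_def]
    show (j:ℕ) ≤ (i:ℕ)
    have := j.2; omega
  have hlamfk : ∀ k : Fin (n - (i:ℕ)), lam (f k) ≤ lam i0 := by
    intro k
    refine hlam ?_
    rw [Fin.le_def]
    show (i:ℕ) ≤ (i:ℕ) + (k:ℕ)
    omega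
  have hle1 : mu i * (w ⬝ᵥ w) ≤ ∑ j, c j * (c j * mu (e j)) := by
    rw [hNw, Finset.mul_sum]
    refine Finset.sum_le_sum fun j _ => ?_
    have h7 := hmuej j
    nlinarith [mul_self_nonneg (c j)]
  have hle2 : ∑ k, d k * (d k * lam (f k)) ≤ lam i0 * (w ⬝ᵥ w) := by
    rw [← hNx, Finset.mul_sum]
    refine Finset.sum_le_sum fun k _ => ?_
    have h7 := hlamfk k
    nlinarith [mul_self_nonneg (d k)]
  have hmain : mu i * (w ⬝ᵥ w) ≤ lam i0 * (w ⬝ᵥ w) := by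
    calc mu i * (w ⬝ᵥ w) ≤ ∑ j, c j * (c j * mu (e j)) := hle1
    _ = x ⬝ᵥ (A *ᵥ x) := by rw [← hq1, hqq]
    _ = ∑ k, d k * (d k * lam (f k)) := hq2
    _ ≤ lam i0 * (w ⬝ᵥ w) := hle2
  have hineq : mu i ≤ lam i0 := le_of_mul_le_mul_right hmain hNpos
  refine ⟨hineq, fun heq => ?_⟩
  -- equality case
  have heq' : lam i0 = mu i := heq
  have hqa : ∑ j, c j * (c j * mu (e j)) = mu i * (w ⬝ᵥ w) := by
    have hub : ∑ j, c j * (c j * mu (e j)) ≤ mu i * (w ⬝ᵥ w) := by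
      rw [← heq']
      calc ∑ j, c j * (c j * mu (e j)) = x ⬝ᵥ (A *ᵥ x) := by rw [← hq1, hqq]
      _ = ∑ k, d k * (d k * lam (f k)) := hq2
      _ ≤ lam i0 * (w ⬝ᵥ w) := hle2
    exact le_antisymm hub hle1
  have hqb : ∑ k, d k * (d k * lam (f k)) = lam i0 * (w ⬝ᵥ w) := by
    have hlb : lam i0 * (w ⬝ᵥ w) ≤ ∑ k, d k * (d k * lam (f k)) := by
      rw [heq']
      calc mu i * (w ⬝ᵥ w) ≤ ∑ j, c j * (c j * mu (e j)) := hle1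
      _ = x ⬝ᵥ (A *ᵥ x) := by rw [← hq1, hqq]
      _ = ∑ k, d k * (d k * lam (f k)) := hq2
    exact le_antisymm hle2 hlb
  -- coefficientwise consequences
  have hcj : ∀ j, c j * mu (e j) = c j * mu i := by
    have hsum0 : ∑ j, (c j * c j) * (mu (e j) - mu i) = 0 := by
      have h8 : ∑ j, (c j * c j) * (mu (e j) - mu i)
          = (∑ j, c j * (c j * mu (e j))) - mu i * (∑ j, c j * c j) := by
        rw [Finset.mul_sum, ← Finset.sum_sub_distrib]
        exact Finset.sum_congr rfl fun j _ => by ring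
      rw [h8, hqa, hNw, sub_self]
    have h9 := (Finset.sum_eq_zero_iff_of_nonneg fun j _ =>
      mul_nonneg (mul_self_nonneg (c j)) (sub_nonneg.mpr (hmuej j))).mp hsum0
    intro j
    rcases mul_eq_zero.mp (h9 j (Finset.mem_univ j)) with h | h
    · rw [mul_self_eq_zero.mp h, zero_mul, zero_mul]
    · have : mu (e j) = mu i := by linarith [sub_eq_zero.mp h]
      rw [this]
  have hdk : ∀ k, d k * lam (f k) = d k * lam i0 := by
    have hsum0 : ∑ k, (d k * d k) * (lam i0 - lam (f k)) = 0 := by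
      have h8 : ∑ k, (d k * d k) * (lam i0 - lam (f k))
          = lam i0 * (∑ k, d k * d k) - (∑ k, d k * (d k * lam (f k))) := by
        rw [Finset.mul_sum, ← Finset.sum_sub_distrib]
        exact Finset.sum_congr rfl fun k _ => by ring
      rw [h8, hqb, hNx, sub_self]
    have h9 := (Finset.sum_eq_zero_iff_of_nonneg fun k _ =>
      mul_nonneg (mul_self_nonneg (d k)) (sub_nonneg.mpr (hlamfk k))).mp hsum0
    intro k
    rcases mul_eq_zero.mp (h9 k (Finset.mem_univ k)) with h | h
    · rw [mul_self_eq_zero.mp h, zero_mul, zero_mul]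
    · have : lam (f k) = lam i0 := by linarith [sub_eq_zero.mp h]
      rw [this]
  have hBweq : (Rᵀ * A * R) *ᵥ w = mu i • w := by
    rw [hBw, hw, Finset.smul_sum]
    exact Finset.sum_congr rfl fun j _ => by rw [hcj j, smul_smul, mul_comm]
  have hAxeq : A *ᵥ (R *ᵥ w) = lam i0 • (R *ᵥ w) := by
    rw [hxw, hAx, ← hd, Finset.smul_sum]
    exact Finset.sum_congr rfl fun k _ => by rw [hdk k, smul_smul, mul_comm]
  exact ⟨w, hw0, hBweq, by rw [hxw]; exact hx0, hAxeq⟩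

lemma trace_eq_sum {m : ℕ} (B : Matrix (Fin m) (Fin m) ℝ)
    (mu : Fin m → ℝ) (v : Fin m → Fin m → ℝ)
    (hvo : ∀ i j, v i ⬝ᵥ v j = if i = j then (1:ℝ) else 0)
    (hve : ∀ i, B *ᵥ v i = mu i • v i) :
    B.trace = ∑ i, mu i := by
  classical
  set V : Matrix (Fin m) (Fin m) ℝ := Matrix.of v with hV
  have hVVt : V * Vᵀ = 1 := by
    ext a b
    have h := hvo a b
    simpa [Matrix.mul_apply, Matrix.one_apply, dotProduct, hV] using h
  have hVtV : Vᵀ * V = 1 := mul_eq_one_comm.mp hVVt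
  have hBV : B * Vᵀ = Vᵀ * Matrix.diagonal mu := by
    ext a b
    have h1 : (B * Vᵀ) a b = (B *ᵥ v b) a := by
      simp [Matrix.mul_apply, Matrix.mulVec, dotProduct, hV]
    rw [h1, hve b, Matrix.mul_diagonal]
    simp [hV, mul_comm]
  have hB : B = Vᵀ * Matrix.diagonal mu * V := by
    calc B = B * (Vᵀ * V) := by rw [hVtV, Matrix.mul_one]
    _ = B * Vᵀ * V := by rw [Matrix.mul_assoc]
    _ = Vᵀ * Matrix.diagonal mu * V := by rw [hBV]
  rw [hB, Matrix.trace_mul_comm, ← Matrix.mul_assoc, hVVt, Matrix.one_mul,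
    Matrix.trace_diagonal]

/-- (Eigenvalue interlacing) Let `A` be symmetric `n×n`, `R` an `n×m` matrix
with `Rᵀ R = I` (`m ≤ n`), and `B = Rᵀ A R`, with eigenvalues
`λ₁ ≥ ... ≥ λₙ` of `A` and `μ₁ ≥ ... ≥ μₘ` of `B` (0-based indexing in the
formal statement). Then (a) `λ_{n-m+i} ≤ μᵢ ≤ λᵢ` for all `i`, whence
`λₙ + ... + λ_{n-m+1} ≤ tr(Rᵀ A R) ≤ λ₁ + ... + λₘ`; and (b) if `λᵢ = μᵢ`,
then there is an eigenvector `w` of `B` for `μᵢ` such that `R w` is an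
eigenvector of `A` for `λᵢ`. -/
theorem stmt_18 {n m : ℕ} (hmn : m ≤ n)
    (A : Matrix (Fin n) (Fin n) ℝ) (hA : A.IsSymm)
    (R : Matrix (Fin n) (Fin m) ℝ) (hR : Rᵀ * R = 1)
    (lam : Fin n → ℝ) (hlam : Antitone lam)
    (u : Fin n → Fin n → ℝ)
    (huo : ∀ i j, u i ⬝ᵥ u j = if i = j then (1 : ℝ) else 0)
    (hue : ∀ i, A *ᵥ u i = lam i • u i)
    (mu : Fin m → ℝ) (hmu : Antitone mu)
    (v : Fin m → Fin m → ℝ)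
    (hvo : ∀ i j, v i ⬝ᵥ v j = if i = j then (1 : ℝ) else 0)
    (hve : ∀ i, (Rᵀ * A * R) *ᵥ v i = mu i • v i) :
    (∀ i : Fin m,
      lam ⟨n - m + (i : ℕ), by omega⟩ ≤ mu i ∧
      mu i ≤ lam ⟨(i : ℕ), by omega⟩) ∧
    (∑ i : Fin m, lam ⟨n - m + (i : ℕ), by omega⟩) ≤ (Rᵀ * A * R).trace ∧
    (Rᵀ * A * R).trace ≤ ∑ i : Fin m, lam ⟨(i : ℕ), by omega⟩ ∧
    (∀ i : Fin m, lam ⟨(i : ℕ), by omega⟩ = mu i →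
      ∃ w : Fin m → ℝ, w ≠ 0 ∧ (Rᵀ * A * R) *ᵥ w = mu i • w ∧
        R *ᵥ w ≠ 0 ∧
        A *ᵥ (R *ᵥ w) = lam ⟨(i : ℕ), by omega⟩ • (R *ᵥ w)) := by
  have hup := fun i => key_upper hmn A R hR lam hlam u huo hue mu hmu v hvo hve i
  -- lower bounds by applying the upper bound to -A with reversed orderings
  set rev : Fin n → Fin n := fun j => ⟨n - 1 - (j:ℕ), by have := j.2; omega⟩ with hrev
  set revm : Fin m → Fin m := fun j => ⟨m - 1 - (j:ℕ), by have := j.2; omega⟩ with hrevm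
  have hrevinj : Function.Injective rev := by
    intro a b hab
    have h := congrArg (fun z : Fin n => (z:ℕ)) hab
    simp only [hrev] at h
    have := a.2; have := b.2
    exact Fin.ext (by omega)
  have hrevminj : Function.Injective revm := by
    intro a b hab
    have h := congrArg (fun z : Fin m => (z:ℕ)) hab
    simp only [hrevm] at h
    have := a.2; have := b.2
    exact Fin.ext (by omega)
  have hlow : ∀ i : Fin m, lam ⟨n - m + (i:ℕ), by have := i.2; omega⟩ ≤ mu i := by
    intro i
    have hBneg : Rᵀ * (-A) * R = -(Rᵀ * A * R) := by
      rw [Matrix.mul_neg, Matrix.neg_mul]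
    have h := (key_upper hmn (-A) R hR (fun j => -lam (rev j))
      (fun a b hab => by
        simp only [neg_le_neg_iff]
        refine hlam ?_
        rw [Fin.le_def]
        simp only [hrev]
        rw [Fin.le_def] at hab
        have := b.2
        omega)
      (fun j => u (rev j))
      (fun a b => by
        rw [huo]
        by_cases h : a = b
        · simp [h]
        · rw [if_neg h, if_neg fun hc => h (hrevinj hc)])
      (fun j => by rw [Matrix.neg_mulVec, hue, neg_smul])
      (fun j => -mu (revm j))
      (fun a b hab => by
        simp only [neg_le_neg_iff]
        refine hmu ?_
        rw [Fin.le_def]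
        simp only [hrevm]
        rw [Fin.le_def] at hab
        have := b.2
        omega)
      (fun j => v (revm j))
      (fun a b => by
        rw [hvo]
        by_cases h : a = b
        · simp [h]
        · rw [if_neg h, if_neg fun hc => h (hrevminj hc)])
      (fun j => by rw [hBneg, Matrix.neg_mulVec, hve, neg_smul])
      (revm i)).1
    have h1 : revm (revm i) = i := by
      have := i.2
      exact Fin.ext (by simp only [hrevm]; omega)
    have h2 : rev ⟨(revm i : ℕ), (revm i).2.trans_le hmn⟩
        = ⟨n - m + (i:ℕ), by have := i.2; omega⟩ := by
      have := i.2
      exact Fin.ext (by simp only [hrev, hrevm]; omega)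
    rw [h1, h2] at h
    linarith
  have hTr : (Rᵀ * A * R).trace = ∑ i, mu i := trace_eq_sum _ mu v hvo hve
  refine ⟨fun i => ⟨hlow i, (hup i).1⟩, ?_, ?_, fun i h => (hup i).2 h⟩
  · rw [hTr]
    exact Finset.sum_le_sum fun i _ => hlow i
  · rw [hTr]
    exact Finset.sum_le_sum fun i _ => (hup i).1
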